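/- Let G be a K5-minor-free bipartite graph with at least one edge and with no induced cycle of length greater than or equal to 6. Then the element (1, …, 1, 2) of ℤ^E × ℤ (all edge-coordinates equal to 1, last coordinate 2) lies in int(M_G); moreover, if int(M_G) = y + M_G for some y ∈ int(M_G), then int(M_G) = (1, …, 1, 2) + M_G. -/

import Mathlib

/-! Basic definitions for cut monoids of finite simple graphs. -/

open Classical in
/-- The cut vector of a vertex set `A`, as a function on `Sym2 V`:
value `1` on pairs with exactly one element in `A`, and `0` otherwise. -/
noncomputable def cutVec {V : Type} (A : Set V) : Sym2 V → ℤ :=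
  Sym2.lift ⟨fun v w => if ((v ∈ A) ↔ (w ∈ A)) then 0 else 1,
    fun v w => if_congr iff_comm rfl rfl⟩

variable {V : Type}

/-- The generators `(δ_A, 1)` of the cut monoid of `G`. -/
def cutGens (G : SimpleGraph V) : Set ((G.edgeSet → ℤ) × ℤ) :=
  {p | ∃ A : Set V, p = (fun e => cutVec A e.1, 1)}

/-- The cut monoid `M_G` of a graph `G`. -/
def cutMonoid (G : SimpleGraph V) : AddSubmonoid ((G.edgeSet → ℤ) × ℤ) :=
  AddSubmonoid.closure (cutGens G)

/-- The group `gp(M_G)` generated by the cut monoid. -/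
def cutGroup (G : SimpleGraph V) : AddSubgroup ((G.edgeSet → ℤ) × ℤ) :=
  AddSubgroup.closure (cutGens G)

/-- `M_G` is normal: every `x ∈ gp(M_G)` with `n • x ∈ M_G` for some `n ≥ 1` lies in `M_G`. -/
def CutNormal (G : SimpleGraph V) : Prop :=
  ∀ x ∈ cutGroup G, (∃ n : ℕ, 1 ≤ n ∧ n • x ∈ cutMonoid G) → x ∈ cutMonoid G

/-- `M_G` is seminormal: every `x ∈ gp(M_G)` with `2 • x ∈ M_G` and `3 • x ∈ M_G`
lies in `M_G`. -/
def CutSeminormal (G : SimpleGraph V) : Prop :=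
  ∀ x ∈ cutGroup G, 2 • x ∈ cutMonoid G → 3 • x ∈ cutMonoid G → x ∈ cutMonoid G

/-- Generators of the cone of `M_G`: nonnegative real multiples of the `(δ_A, 1)`. -/
noncomputable def cutConeGens (G : SimpleGraph V) : Set ((G.edgeSet → ℝ) × ℝ) :=
  {q | ∃ (c : ℝ) (A : Set V), 0 ≤ c ∧
    q = c • ((fun e => ((cutVec A e.1 : ℤ) : ℝ), (1 : ℝ)))}

/-- The cone `cone(M_G)`: all finite nonnegative real combinations of the `(δ_A, 1)`. -/
noncomputable def cutCone (G : SimpleGraph V) : Set ((G.edgeSet → ℝ) × ℝ) :=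
  (AddSubmonoid.closure (cutConeGens G) : Set ((G.edgeSet → ℝ) × ℝ))

/-- The canonical map from `ℤ^E × ℤ` to `ℝ^E × ℝ`. -/
noncomputable def toRealCut (G : SimpleGraph V) (p : (G.edgeSet → ℤ) × ℤ) :
    (G.edgeSet → ℝ) × ℝ :=
  (fun e => ((p.1 e : ℤ) : ℝ), ((p.2 : ℤ) : ℝ))

/-- `int(M_G)`: elements of `M_G` mapping into the topological interior of `cone(M_G)`. -/
noncomputable def cutInterior (G : SimpleGraph V) : Set ((G.edgeSet → ℤ) × ℤ) :=
  {p | p ∈ cutMonoid G ∧ toRealCut G p ∈ interior (cutCone G)}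

/-- The set of last coordinates `α ∈ ℕ` realized by elements of `int(M_G)`;
its least element is `m(G)`. -/
noncomputable def cutDegrees (G : SimpleGraph V) : Set ℕ :=
  {α | ∃ x : G.edgeSet → ℤ, ((x, (α : ℤ)) : (G.edgeSet → ℤ) × ℤ) ∈ cutInterior G}

/-- `H` is a minor of `G`: branch sets `B u` are nonempty, pairwise disjoint,
induce connected subgraphs, and edges of `H` are witnessed by edges of `G`. -/
def GraphMinor {W V : Type} (H : SimpleGraph W) (G : SimpleGraph V) : Prop :=
  ∃ B : W → Set V,
    (∀ u, (B u).Nonempty) ∧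
    (∀ u v, u ≠ v → Disjoint (B u) (B v)) ∧
    (∀ u, (G.induce (B u)).Connected) ∧
    (∀ u v, H.Adj u v → ∃ a ∈ B u, ∃ b ∈ B v, G.Adj a b)

/-- `G` is `K₅`-minor-free. -/
def K5Free (G : SimpleGraph V) : Prop :=
  ¬ GraphMinor (⊤ : SimpleGraph (Fin 5)) G

/-- `G` is bipartite: vertices split into two parts so every edge joins the parts. -/
def BipartiteG (G : SimpleGraph V) : Prop :=
  ∃ s : Set V, ∀ ⦃v w⦄, G.Adj v w → ((v ∈ s ∧ w ∉ s) ∨ (w ∈ s ∧ v ∉ s))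

/-- `G` has an induced cycle of length `n` (n ≥ 3): an induced-subgraph copy of the
cycle graph of length `n`. -/
def HasInducedCycleLen (G : SimpleGraph V) (n : ℕ) : Prop :=
  3 ≤ n ∧ Nonempty (SimpleGraph.cycleGraph n ↪g G)

/-- `G` contains a triangle. -/
def HasTriangle (G : SimpleGraph V) : Prop :=
  ∃ a b c, G.Adj a b ∧ G.Adj b c ∧ G.Adj a c

/-- `G` is chordal: every induced cycle is a triangle. -/
def ChordalG (G : SimpleGraph V) : Prop :=
  ∀ n, HasInducedCycleLen G n → n = 3

/-- `G` is bridgeless: every edge lies on some cycle. -/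
def BridgelessG (G : SimpleGraph V) : Prop :=
  ∀ e ∈ G.edgeSet, ∃ (v : V) (c : G.Walk v v), c.IsCycle ∧ e ∈ c.edges

/-- `G` is (isomorphic to) a cycle of length `n`. -/
def IsCycleOfLen (G : SimpleGraph V) (n : ℕ) : Prop :=
  3 ≤ n ∧ Nonempty (G ≃g SimpleGraph.cycleGraph n)

/-- `G` is a cycle. -/
def IsCycleGraph (G : SimpleGraph V) : Prop :=
  ∃ n, IsCycleOfLen G n

/-- `G` is a `0`-sum of `G1` and `G2`: copies of `G1`, `G2` cover `G`,
overlap in exactly one vertex, and every edge comes from `G1` or `G2`. -/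
def IsZeroSumDecomp {V1 V2 : Type} (G : SimpleGraph V) (G1 : SimpleGraph V1)
    (G2 : SimpleGraph V2) : Prop :=
  ∃ (f1 : V1 ↪ V) (f2 : V2 ↪ V),
    Set.range f1 ∪ Set.range f2 = Set.univ ∧
    (∃ v, Set.range f1 ∩ Set.range f2 = {v}) ∧
    (∀ a b, G.Adj a b ↔
      ((∃ x y, f1 x = a ∧ f1 y = b ∧ G1.Adj x y) ∨
       (∃ x y, f2 x = a ∧ f2 y = b ∧ G2.Adj x y)))

/-- `G` is a `1`-sum of `G1` and `G2` along a common edge. -/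
def IsOneSumDecomp {V1 V2 : Type} (G : SimpleGraph V) (G1 : SimpleGraph V1)
    (G2 : SimpleGraph V2) : Prop :=
  ∃ (f1 : V1 ↪ V) (f2 : V2 ↪ V) (v w : V),
    v ≠ w ∧
    Set.range f1 ∪ Set.range f2 = Set.univ ∧
    Set.range f1 ∩ Set.range f2 = {v, w} ∧
    (∃ x y, f1 x = v ∧ f1 y = w ∧ G1.Adj x y) ∧
    (∃ x y, f2 x = v ∧ f2 y = w ∧ G2.Adj x y) ∧
    (∀ a b, G.Adj a b ↔
      ((∃ x y, f1 x = a ∧ f1 y = b ∧ G1.Adj x y) ∨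
       (∃ x y, f2 x = a ∧ f2 y = b ∧ G2.Adj x y)))

/-- Ring graphs: obtained, up to adding isolated vertices, from finitely many
(finite) trees and cycles by iterated `0`-sums and `1`-sums. -/
inductive IsRingGraph : {V : Type} → SimpleGraph V → Prop
  | tree {V : Type} (G : SimpleGraph V) :
      Finite V → G.Connected → G.IsAcyclic → IsRingGraph G
  | cycle {V : Type} (G : SimpleGraph V) : IsCycleGraph G → IsRingGraph G
  | zeroSum {V1 V2 V : Type} {G1 : SimpleGraph V1} {G2 : SimpleGraph V2}
      {G : SimpleGraph V} :
      IsRingGraph G1 → IsRingGraph G2 → IsZeroSumDecomp G G1 G2 → IsRingGraph G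
  | oneSum {V1 V2 V : Type} {G1 : SimpleGraph V1} {G2 : SimpleGraph V2}
      {G : SimpleGraph V} :
      IsRingGraph G1 → IsRingGraph G2 → IsOneSumDecomp G G1 G2 → IsRingGraph G
  | addIsolated {V W : Type} {G : SimpleGraph V} {H : SimpleGraph W} (f : V ↪ W) :
      IsRingGraph G → (∀ a b, H.Adj a b ↔ ∃ x y, f x = a ∧ f y = b ∧ G.Adj x y) →
      IsRingGraph H

/-- An edge of an induced subgraph is an edge of the ambient graph. -/
lemma induce_edge_mem (G : SimpleGraph V) (s : Set V) (e : Sym2 s)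
    (he : e ∈ (G.induce s).edgeSet) : e.map Subtype.val ∈ G.edgeSet := by
  induction e using Sym2.ind with
  | _ a b =>
    rw [Sym2.map_pair_eq, SimpleGraph.mem_edgeSet]
    exact he

/-- Restriction of a vector indexed by the edges of `G` to the edges of the
subgraph of `G` induced on `s`. -/
noncomputable def restrictCut (G : SimpleGraph V) (s : Set V) (p : G.edgeSet → ℤ) :
    (G.induce s).edgeSet → ℤ :=
  fun e => p ⟨e.1.map Subtype.val, induce_edge_mem G s e.1 e.2⟩


/-! ### Auxiliary lemmas -/

section CutAux

open Classical
open scoped symmDiff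

variable {V : Type}

lemma cutVec_mk' (A : Set V) (a b : V) :
    cutVec A s(a,b) = if ((a ∈ A) ↔ (b ∈ A)) then 0 else 1 := by
  simp [cutVec]

lemma cutVec_bounds' (A : Set V) (z : Sym2 V) : 0 ≤ cutVec A z ∧ cutVec A z ≤ 1 := by
  induction z using Sym2.ind with
  | _ a b => rw [cutVec_mk']; split_ifs <;> simp

lemma cutVec_empty' (z : Sym2 V) : cutVec (∅ : Set V) z = 0 := by
  induction z using Sym2.ind with
  | _ a b => rw [cutVec_mk']; simp

lemma cutVec_key' (a b c d : V) (hab : a ≠ b) (hcd : c ≠ d) :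
    cutVec {a} s(c,d) + cutVec {b} s(c,d) - cutVec ({a,b} : Set V) s(c,d)
      = if s(c,d) = s(a,b) then 2 else 0 := by
  rw [cutVec_mk', cutVec_mk', cutVec_mk']
  simp only [Sym2.eq_iff, Set.mem_singleton_iff, Set.mem_insert_iff]
  by_cases h1 : c = a <;> by_cases h2 : d = a <;> by_cases h3 : c = b <;> by_cases h4 : d = b <;>
    simp_all

lemma cutVec_sum' [Fintype V] (a b : V) (hab : a ≠ b) :
    (∑ A : Set V, cutVec A s(a,b)) * 2 = (Fintype.card (Set V) : ℤ) := by
  have hinv : Function.Involutive (fun A : Set V => A ∆ {b}) :=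
    fun A => symmDiff_symmDiff_cancel_right {b} A
  have hσ : ∀ A : Set V, cutVec A s(a,b) + cutVec (A ∆ {b}) s(a,b) = 1 := by
    intro A
    have ha : a ∈ A ∆ {b} ↔ a ∈ A := by simp [Set.mem_symmDiff, hab]
    have hb : b ∈ A ∆ {b} ↔ b ∉ A := by simp [Set.mem_symmDiff]
    rw [cutVec_mk', cutVec_mk', ha, hb]
    by_cases h1 : a ∈ A <;> by_cases h2 : b ∈ A <;> simp [h1, h2]
  calc (∑ A : Set V, cutVec A s(a,b)) * 2
      = ∑ A : Set V, cutVec A s(a,b) + ∑ A : Set V, cutVec (A ∆ {b}) s(a,b) := by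
        rw [Function.Bijective.sum_comp hinv.bijective (fun A => cutVec A s(a,b))]; ring
    _ = ∑ A : Set V, (cutVec A s(a,b) + cutVec (A ∆ {b}) s(a,b)) := by
        rw [Finset.sum_add_distrib]
    _ = ∑ _A : Set V, (1:ℤ) := by simp_rw [hσ]
    _ = (Fintype.card (Set V) : ℤ) := by simp

/-- Structure facts about elements of the cut monoid. -/
lemma cutMonoid_struct (G : SimpleGraph V) {p : (G.edgeSet → ℤ) × ℤ}
    (hp : p ∈ cutMonoid G) :
    0 ≤ p.2 ∧ (∀ e, 0 ≤ p.1 e ∧ p.1 e ≤ p.2) ∧ (p.2 = 0 → p = 0) ∧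
      (p.2 = 1 → p ∈ cutGens G) := by
  induction hp using AddSubmonoid.closure_induction with
  | mem q hq =>
    obtain ⟨A, rfl⟩ := hq
    refine ⟨by norm_num, fun e => ?_, by norm_num, fun _ => ⟨A, rfl⟩⟩
    simpa using cutVec_bounds' A e.1
  | zero => exact ⟨le_refl 0, fun e => ⟨le_refl 0, le_refl 0⟩, fun _ => rfl, by simp⟩
  | add q r hq hr ihq ihr =>
    obtain ⟨h1, h2, h3, h4⟩ := ihq
    obtain ⟨g1, g2, g3, g4⟩ := ihr
    have hadd2 : (q + r).2 = q.2 + r.2 := rfl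
    have hadd1 : ∀ e, (q + r).1 e = q.1 e + r.1 e := fun e => rfl
    refine ⟨by rw [hadd2]; omega, fun e => ?_, fun h0 => ?_, fun h1' => ?_⟩
    · rw [hadd1 e, hadd2]
      have := h2 e; have := g2 e
      omega
    · rw [hadd2] at h0
      have hq0 : q.2 = 0 := by omega
      have hr0 : r.2 = 0 := by omega
      rw [h3 hq0, g3 hr0, add_zero]
    · rw [hadd2] at h1'
      rcases (by omega : q.2 = 0 ∨ r.2 = 0) with h | h
      · rw [h3 h, zero_add]
        exact g4 (by omega)
      · rw [g3 h, add_zero]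
        exact h4 (by omega)

end CutAux

section CutAux2

open Classical
variable {V : Type}

/-- Every element of the cut cone satisfies `0 ≤ q.2` and `0 ≤ q.1 e ≤ q.2`. -/
lemma cutCone_bounds (G : SimpleGraph V) {q : (G.edgeSet → ℝ) × ℝ}
    (hq : q ∈ cutCone G) : 0 ≤ q.2 ∧ ∀ e, 0 ≤ q.1 e ∧ q.1 e ≤ q.2 := by
  induction hq using AddSubmonoid.closure_induction with
  | mem x hx =>
    obtain ⟨c, A, hc, rfl⟩ := hx
    constructor
    · simpa using hc
    · intro e
      have hb := cutVec_bounds' A e.1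
      have hb0 : (0:ℝ) ≤ ((cutVec A e.1 : ℤ) : ℝ) := by exact_mod_cast hb.1
      have hb1 : ((cutVec A e.1 : ℤ) : ℝ) ≤ 1 := by exact_mod_cast hb.2
      simp only [Prod.smul_snd, Prod.smul_fst, Pi.smul_apply, smul_eq_mul, mul_one]
      constructor
      · positivity
      · calc c * ((cutVec A e.1 : ℤ) : ℝ) ≤ c * 1 := by
              exact mul_le_mul_of_nonneg_left hb1 hc
          _ = c := mul_one c
  | zero => exact ⟨le_refl 0, fun e => ⟨le_refl 0, le_refl 0⟩⟩
  | add x y hx hy ihx ihy =>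
    refine ⟨add_nonneg ihx.1 ihy.1, fun e => ?_⟩
    have h1 : (x + y).1 e = x.1 e + y.1 e := rfl
    have h2 : (x + y).2 = x.2 + y.2 := rfl
    rw [h1, h2]
    exact ⟨add_nonneg (ihx.2 e).1 (ihy.2 e).1, add_le_add (ihx.2 e).2 (ihy.2 e).2⟩

/-- A linear functional which is nonnegative on `S` is strictly positive on the
interior of `S`, provided it takes a negative value somewhere. -/
lemma pos_of_mem_interior {E : Type*} [AddCommGroup E] [Module ℝ E]
    [TopologicalSpace E] [IsTopologicalAddGroup E] [ContinuousSMul ℝ E]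
    {S : Set E} (f : E →ₗ[ℝ] ℝ) (hfc : Continuous f) {v : E} (hv : f v < 0)
    (hS : ∀ q ∈ S, 0 ≤ f q) {x : E} (hx : x ∈ interior S) : 0 < f x := by
  have hcont : Continuous (fun t : ℝ => x + t • v) := by continuity
  have h0 : (fun t : ℝ => x + t • v) 0 = x := by simp
  have hev : ∀ᶠ t in nhds (0:ℝ), x + t • v ∈ interior S :=
    (hcont.continuousAt (x := (0:ℝ))).eventually_mem
      (by rw [show x + (0:ℝ) • v = x by simp]; exact isOpen_interior.mem_nhds hx)
  have hev' : ∀ᶠ t in nhdsWithin (0:ℝ) (Set.Ioi 0), x + t • v ∈ interior S :=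
    hev.filter_mono nhdsWithin_le_nhds
  obtain ⟨t, htS, ht⟩ := (hev'.and self_mem_nhdsWithin).exists
  have hle : 0 ≤ f (x + t • v) := hS _ (interior_subset htS)
  rw [map_add, map_smul, smul_eq_mul] at hle
  have ht0 : (0:ℝ) < t := ht
  nlinarith

end CutAux2

section CutAux3

open Classical
variable {V : Type}

/-- The real cut generators as a family indexed by vertex subsets. -/
noncomputable def gvec (G : SimpleGraph V) : Set V → (G.edgeSet → ℝ) × ℝ :=
  fun A => (fun e => ((cutVec A e.1 : ℤ) : ℝ), 1)

lemma cutVec_key2 (G : SimpleGraph V) (a b : V) (hab : a ≠ b) (z : Sym2 V)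
    (hz : z ∈ G.edgeSet) :
    ((cutVec {a} z + cutVec {b} z - cutVec ({a,b} : Set V) z : ℤ) : ℝ)
      = if z = s(a,b) then 2 else 0 := by
  revert hz
  induction z using Sym2.ind with
  | _ c d =>
    intro hz
    have hcd : c ≠ d := G.ne_of_adj ((SimpleGraph.mem_edgeSet G).mp hz)
    rw [show (cutVec {a} s(c,d) + cutVec {b} s(c,d) - cutVec ({a,b} : Set V) s(c,d) : ℤ)
        = if s(c,d) = s(a,b) then 2 else 0 from cutVec_key' a b c d hab hcd]
    split_ifs <;> norm_num

lemma gvec_span (G : SimpleGraph V) [Fintype V] :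
    Submodule.span ℝ (Set.range (gvec G)) = ⊤ := by
  haveI : Fintype G.edgeSet := Set.Finite.fintype (Set.toFinite _)
  rw [Submodule.eq_top_iff']
  intro x
  have h0 : ((0 : G.edgeSet → ℝ), (1:ℝ)) ∈ Submodule.span ℝ (Set.range (gvec G)) := by
    have hg : gvec G ∅ = ((0 : G.edgeSet → ℝ), (1:ℝ)) := by
      unfold gvec
      refine Prod.ext ?_ rfl
      funext e
      simp [cutVec_empty']
    rw [← hg]
    exact Submodule.subset_span ⟨∅, rfl⟩
  have hsingle : ∀ e : G.edgeSet,
      ((Pi.single e (1:ℝ)), (0:ℝ)) ∈ Submodule.span ℝ (Set.range (gvec G)) := by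
    rintro ⟨z, hz⟩
    revert hz
    induction z using Sym2.ind with
    | _ a b =>
      intro hz
      have hab : a ≠ b := G.ne_of_adj ((SimpleGraph.mem_edgeSet G).mp hz)
      have key : ((Pi.single (⟨s(a,b),hz⟩ : G.edgeSet) (1:ℝ)), (0:ℝ))
          = (2⁻¹ : ℝ) • (gvec G {a} + gvec G {b} - gvec G {a,b} - gvec G ∅) := by
        refine Prod.ext ?_ ?_
        · funext f
          have hf := cutVec_key2 G a b hab f.1 f.2
          push_cast at hf
          simp only [Prod.smul_fst, Prod.fst_add, Prod.fst_sub, Pi.smul_apply,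
            Pi.add_apply, Pi.sub_apply, smul_eq_mul, gvec, Pi.single_apply,
            Subtype.ext_iff, cutVec_empty', Int.cast_zero, sub_zero]
          rw [hf]
          split_ifs <;> norm_num
        · simp [gvec]
      rw [key]
      refine Submodule.smul_mem _ _ (sub_mem (sub_mem (add_mem ?_ ?_) ?_) ?_) <;>
        exact Submodule.subset_span ⟨_, rfl⟩
  have hx : x = (∑ e : G.edgeSet, x.1 e • ((Pi.single e (1:ℝ), (0:ℝ)) : (G.edgeSet → ℝ) × ℝ))
      + x.2 • ((0 : G.edgeSet → ℝ), (1:ℝ)) := by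
    refine Prod.ext ?_ ?_
    · rw [Prod.fst_add, Prod.fst_sum]
      simp only [Prod.smul_fst, Prod.smul_snd, smul_zero, add_zero]
      have : ∀ e : G.edgeSet, x.1 e • (Pi.single e (1:ℝ) : G.edgeSet → ℝ) = Pi.single e (x.1 e) := by
        intro e
        rw [← Pi.single_smul, smul_eq_mul, mul_one]
      simp_rw [this]
      rw [Finset.univ_sum_single]
    · rw [Prod.snd_add, Prod.snd_sum]
      simp
  rw [hx]
  exact add_mem (Submodule.sum_mem _ fun e _ => Submodule.smul_mem _ _ (hsingle e))
    (Submodule.smul_mem _ _ h0)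

end CutAux3

section CutAux4
open Classical
variable {V : Type}

lemma cutVec_sum_real (G : SimpleGraph V) [Fintype V] (z : Sym2 V) (hz : z ∈ G.edgeSet) :
    (∑ A : Set V, ((cutVec A z : ℤ) : ℝ)) * 2 = (Fintype.card (Set V) : ℝ) := by
  revert hz
  induction z using Sym2.ind with
  | _ a b =>
    intro hz
    have hab : a ≠ b := G.ne_of_adj ((SimpleGraph.mem_edgeSet G).mp hz)
    exact_mod_cast congrArg (fun n : ℤ => (n : ℝ)) (cutVec_sum' a b hab)

lemma one_two_interior (G : SimpleGraph V) [Fintype V] :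
    toRealCut G ((fun _ => 1, 2) : (G.edgeSet → ℤ) × ℤ) ∈ interior (cutCone G) := by
  haveI : Fintype G.edgeSet := Set.Finite.fintype (Set.toFinite _)
  set N : ℝ := (Fintype.card (Set V) : ℝ) with hN
  have hNpos : (0:ℝ) < N := by
    rw [hN]
    exact_mod_cast Fintype.card_pos
  set c : ℝ := 2 / N with hc
  have hcpos : 0 < c := by positivity
  -- the linear combination map
  let T : ((Set V) → ℝ) →ₗ[ℝ] (G.edgeSet → ℝ) × ℝ :=
    { toFun := fun l => ∑ A : Set V, l A • gvec G A
      map_add' := by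
        intro l m
        simp [add_smul, Finset.sum_add_distrib]
      map_smul' := by
        intro r l
        simp [smul_smul, Finset.smul_sum] }
  have hT : ∀ l, T l = ∑ A : Set V, l A • gvec G A := fun _ => rfl
  have hTsurj : Function.Surjective T := by
    rw [← LinearMap.range_eq_top]
    rw [← top_le_iff, ← gvec_span G]
    refine Submodule.span_le.mpr ?_
    rintro _ ⟨A, rfl⟩
    refine ⟨Pi.single A 1, ?_⟩
    rw [hT]
    simp [Pi.single_apply, ite_smul]
  -- T maps the constant vector c to the target point
  have hTc : T (fun _ => c) = toRealCut G ((fun _ => 1, 2) : (G.edgeSet → ℤ) × ℤ) := by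
    rw [hT]
    refine Prod.ext ?_ ?_
    · funext e
      rw [Prod.fst_sum]
      simp only [Prod.smul_fst, Finset.sum_apply, Pi.smul_apply, smul_eq_mul, gvec]
      have hsum := cutVec_sum_real G e.1 e.2
      have : ∑ A : Set V, c * ((cutVec A e.1 : ℤ) : ℝ)
          = c * ∑ A : Set V, ((cutVec A e.1 : ℤ) : ℝ) := by rw [Finset.mul_sum]
      rw [this]
      show c * (∑ A : Set V, ((cutVec A e.1 : ℤ) : ℝ)) = ((1:ℤ):ℝ)
      rw [hc]
      field_simp
      push_cast
      linarith [hsum]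
    · rw [Prod.snd_sum]
      simp only [Prod.smul_snd, gvec, smul_eq_mul, mul_one]
      rw [Finset.sum_const, nsmul_eq_mul]
      show (Fintype.card (Set V) : ℝ) * c = ((2:ℤ):ℝ)
      rw [hc, ← hN]
      field_simp
      norm_num
  -- a continuous right inverse
  obtain ⟨S, hS⟩ := T.exists_rightInverse_of_surjective (LinearMap.range_eq_top.mpr hTsurj)
  have hScont : Continuous S := S.continuous_of_finiteDimensional
  -- the open neighbourhood
  set xg := toRealCut G ((fun _ => 1, 2) : (G.edgeSet → ℤ) × ℤ) with hxg
  let φ : (G.edgeSet → ℝ) × ℝ → (Set V) → ℝ := fun x => (fun _ => c) + S (x - xg)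
  have hφcont : Continuous φ := by
    apply Continuous.add continuous_const
    exact hScont.comp ((continuous_id.sub continuous_const))
  let U : Set ((Set V) → ℝ) := {l | ∀ A, 0 < l A}
  have hUopen : IsOpen U := by
    have : U = ⋂ A : Set V, (fun l : (Set V) → ℝ => l A) ⁻¹' (Set.Ioi 0) := by
      ext l; simp [U, Set.mem_iInter]
    rw [this]
    exact isOpen_iInter_of_finite fun A => (isOpen_Ioi).preimage (continuous_apply A)
  have hW : xg ∈ φ ⁻¹' U := by
    show φ xg ∈ U
    have : φ xg = fun _ => c := by
      show (fun _ => c) + S (xg - xg) = _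
      rw [sub_self, map_zero, add_zero]
    rw [this]
    exact fun A => hcpos
  have hWsub : φ ⁻¹' U ⊆ cutCone G := by
    intro x hx
    have hTφ : T (φ x) = x := by
      show T ((fun _ => c) + S (x - xg)) = x
      rw [map_add]
      have h1 : T (S (x - xg)) = x - xg := by
        have := LinearMap.congr_fun hS (x - xg)
        simpa using this
      rw [h1, hTc]
      abel
    rw [← hTφ, hT]
    refine AddSubmonoid.sum_mem _ fun A _ => ?_
    exact AddSubmonoid.subset_closure ⟨φ x A, A, le_of_lt (hx A), rfl⟩
  exact interior_maximal hWsub (hUopen.preimage hφcont) hW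

end CutAux4

section CutAux5
open Classical
variable {V : Type}

/-- For a bipartite graph, `(1,…,1,2)` lies in the cut monoid. -/
lemma one_two_mem_cutMonoid (G : SimpleGraph V) (hbip : BipartiteG G) :
    ((fun _ => 1, 2) : (G.edgeSet → ℤ) × ℤ) ∈ cutMonoid G := by
  obtain ⟨s, hs⟩ := hbip
  have hcut : ∀ z ∈ G.edgeSet, cutVec s z = 1 := by
    intro z
    induction z using Sym2.ind with
    | _ a b =>
      intro hz
      have hadj := (SimpleGraph.mem_edgeSet G).mp hz
      rw [cutVec_mk']
      rcases hs hadj with ⟨h1, h2⟩ | ⟨h1, h2⟩ <;> simp [h1, h2]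
  have hsplit : ((fun _ => 1, 2) : (G.edgeSet → ℤ) × ℤ)
      = ((fun e => cutVec s e.1, 1) : (G.edgeSet → ℤ) × ℤ)
        + ((fun e => cutVec (∅ : Set V) e.1, 1) : (G.edgeSet → ℤ) × ℤ) := by
    refine Prod.ext ?_ rfl
    funext e
    show (1:ℤ) = cutVec s e.1 + cutVec (∅ : Set V) e.1
    rw [hcut e.1 e.2, cutVec_empty']
    norm_num
  rw [hsplit]
  exact AddSubmonoid.add_mem _
    (AddSubmonoid.subset_closure ⟨s, rfl⟩)
    (AddSubmonoid.subset_closure ⟨∅, rfl⟩)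

/-- Every element of `int(M_G)` has last coordinate at least `2` (when `G` has an edge). -/
lemma two_le_of_mem_cutInterior [Fintype V] (G : SimpleGraph V) (hedge : G.edgeSet.Nonempty)
    {p : (G.edgeSet → ℤ) × ℤ} (hp : p ∈ cutInterior G) : 2 ≤ p.2 := by
  haveI : Fintype G.edgeSet := Set.Finite.fintype (Set.toFinite _)
  obtain ⟨hpM, hpI⟩ := hp
  obtain ⟨h1, _, h3, h4⟩ := cutMonoid_struct G hpM
  -- functional: second coordinate
  let fsnd : ((G.edgeSet → ℝ) × ℝ) →ₗ[ℝ] ℝ := (LinearMap.snd ℝ _ _)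
  have hfsndS : ∀ q ∈ cutCone G, 0 ≤ fsnd q := fun q hq => (cutCone_bounds G hq).1
  have hfsndv : fsnd ((0 : G.edgeSet → ℝ), (-1:ℝ)) < 0 := by norm_num [fsnd]
  have hpos : (0:ℝ) < (p.2 : ℝ) := by
    have := pos_of_mem_interior fsnd fsnd.continuous_of_finiteDimensional
      hfsndv hfsndS hpI
    simpa [fsnd, toRealCut] using this
  have hp2pos : 0 < p.2 := by exact_mod_cast hpos
  by_contra hlt
  have hp2 : p.2 = 1 := by omega
  obtain ⟨A, hA⟩ := h4 hp2
  obtain ⟨z0, hz0⟩ := hedge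
  set e0 : G.edgeSet := ⟨z0, hz0⟩
  have hb := cutVec_bounds' A e0.1
  rcases (by omega : cutVec A e0.1 = 0 ∨ cutVec A e0.1 = 1) with h | h
  · -- functional: evaluation at e0
    let fe : ((G.edgeSet → ℝ) × ℝ) →ₗ[ℝ] ℝ :=
      (LinearMap.proj e0).comp (LinearMap.fst ℝ _ _)
    have hfeS : ∀ q ∈ cutCone G, 0 ≤ fe q := fun q hq => ((cutCone_bounds G hq).2 e0).1
    have hfev : fe ((Pi.single e0 (-1:ℝ) : G.edgeSet → ℝ), (0:ℝ)) < 0 := by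
      simp [fe]
    have := pos_of_mem_interior fe fe.continuous_of_finiteDimensional hfev hfeS hpI
    rw [hA] at this
    have hval : fe (toRealCut G ((fun e => cutVec A e.1, 1))) = ((cutVec A e0.1 : ℤ) : ℝ) := rfl
    rw [hval, h] at this
    norm_num at this
  · -- functional: q.2 - q.1 e0
    let fe : ((G.edgeSet → ℝ) × ℝ) →ₗ[ℝ] ℝ :=
      (LinearMap.snd ℝ _ _) - (LinearMap.proj e0).comp (LinearMap.fst ℝ _ _)
    have hfeS : ∀ q ∈ cutCone G, 0 ≤ fe q := by
      intro q hq
      have := (cutCone_bounds G hq).2 e0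
      have hv : fe q = q.2 - q.1 e0 := rfl
      rw [hv]
      linarith [this.2]
    have hfev : fe ((0 : G.edgeSet → ℝ), (-1:ℝ)) < 0 := by
      have hv : fe ((0 : G.edgeSet → ℝ), (-1:ℝ)) = (-1:ℝ) - 0 := rfl
      rw [hv]; norm_num
    have := pos_of_mem_interior fe fe.continuous_of_finiteDimensional hfev hfeS hpI
    rw [hA] at this
    have hval : fe (toRealCut G ((fun e => cutVec A e.1, 1)))
        = ((1:ℤ):ℝ) - ((cutVec A e0.1 : ℤ) : ℝ) := rfl
    rw [hval, h] at this
    norm_num at this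

end CutAux5
/-- For a `K₅`-minor-free bipartite graph with at least one edge and
no induced cycle of length `≥ 6`, the element `(1,…,1,2)` lies in `int(M_G)`; moreover
if `int(M_G) = y + M_G` for some `y ∈ int(M_G)`, then `int(M_G) = (1,…,1,2) + M_G`. -/
theorem bipartite_gorenstein_generator {V : Type} [Fintype V] (G : SimpleGraph V)
    (hK5 : K5Free G) (hbip : BipartiteG G) (hedge : G.edgeSet.Nonempty)
    (hcyc : ∀ n, 6 ≤ n → ¬ HasInducedCycleLen G n) :
    (((fun _ => 1, 2) : (G.edgeSet → ℤ) × ℤ) ∈ cutInterior G) ∧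
    ∀ y ∈ cutInterior G,
      cutInterior G = (fun m => y + m) '' (cutMonoid G : Set ((G.edgeSet → ℤ) × ℤ)) →
      cutInterior G =
        (fun m => ((fun _ => 1, 2) : (G.edgeSet → ℤ) × ℤ) + m) ''
          (cutMonoid G : Set ((G.edgeSet → ℤ) × ℤ)) := by
  have hgI : (((fun _ => 1, 2) : (G.edgeSet → ℤ) × ℤ) ∈ cutInterior G) :=
    ⟨one_two_mem_cutMonoid G hbip, one_two_interior G⟩
  refine ⟨hgI, ?_⟩
  intro y hy h
  -- from h and hgI, (1,…,1,2) = y + m for some m in the monoid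
  have hg' := hgI
  rw [h] at hg'
  obtain ⟨m, hmM, hym⟩ := hg'
  have hy2 : 2 ≤ y.2 := two_le_of_mem_cutInterior G hedge hy
  have hm := cutMonoid_struct G hmM
  have hsnd : y.2 + m.2 = 2 := by
    have := congrArg Prod.snd hym
    simpa using this
  have hm2 : m.2 = 0 := by omega
  have hm0 : m = 0 := hm.2.2.1 hm2
  have hyg : y = ((fun _ => 1, 2) : (G.edgeSet → ℤ) × ℤ) := by
    rw [← hym, hm0]; show y = y + 0; rw [add_zero]
  rw [← hyg]
  exact h
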